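/- Let E and F be Borel subsets of Euclidean spaces, let P be a probability measure on L(E), and for each x ∈ E let P′(·|x) be a probability measure on L(F), measurably depending on x. Let p be a probability measure on E with p(φ) ≤ ∫ ‖φ·f‖_∞ P(df) for all φ ∈ L^∞(E), and let p′(·|x) be a Markov kernel from E to F with p′(ψ|x) ≤ ∫ sup_{y∈F}(ψ(y)f′(y)) P′(df′|x) for all ψ ∈ L^∞(F) and all x ∈ E. Then, assuming the relevant functions are measurable, for every Φ ∈ L^∞(E×F) it holds that ∫∫ Φ(x,y) p′(dy|x) p(dx) ≤ ∫ sup_{x∈E} [ f(x) · ∫ sup_{y∈F}(Φ(x,y)f′(y)) P′(df′|x) ] P(df). -/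

import Mathlib

open MeasureTheory ProbabilityTheory

/-- A possibility function: a measurable `[0,1]`-valued function with supremum `1`. -/
def IsPossibility {E : Type*} [MeasurableSpace E] (f : E → ℝ) : Prop :=
  Measurable f ∧ (∀ x, f x ∈ Set.Icc (0 : ℝ) 1) ∧ (⨆ x, f x) = 1

/-- Inductive step in the proof of Theorem 2.6: if `p` is dominated by the
outer measure induced by `P` on `L(E)` and the Markov kernel `p′(·|x)` is dominated by the
conditional outer measure induced by `P′(·|x)` on `L(F)`, then the two-step integral of a
bounded nonnegative measurable `Φ` is dominated by the composed outer measure. -/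
theorem stmt_1 {dE dF : ℕ} (E : Set (EuclideanSpace ℝ (Fin dE)))
    (F : Set (EuclideanSpace ℝ (Fin dF))) (hE : MeasurableSet E) (hF : MeasurableSet F)
    (P : Measure (↥E → ℝ)) [IsProbabilityMeasure P] (hP : ∀ᵐ f ∂P, IsPossibility f)
    (P' : Kernel ↥E (↥F → ℝ)) [IsMarkovKernel P']
    (hP' : ∀ x, ∀ᵐ f' ∂(P' x), IsPossibility f')
    (p : Measure ↥E) [IsProbabilityMeasure p]
    (hdom : ∀ φ : ↥E → ℝ, Measurable φ → (∀ x, 0 ≤ φ x) → (∃ C, ∀ x, φ x ≤ C) →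
      ∫ x, φ x ∂p ≤ ∫ f, (⨆ x, φ x * f x) ∂P)
    (p' : Kernel ↥E ↥F) [IsMarkovKernel p']
    (hdom' : ∀ x, ∀ ψ : ↥F → ℝ, Measurable ψ → (∀ y, 0 ≤ ψ y) → (∃ C, ∀ y, ψ y ≤ C) →
      ∫ y, ψ y ∂(p' x) ≤ ∫ f', (⨆ y, ψ y * f' y) ∂(P' x))
    (Φ : ↥E × ↥F → ℝ) (hΦm : Measurable Φ) (hΦ0 : ∀ z, 0 ≤ Φ z)
    (hΦb : ∃ C, ∀ z, Φ z ≤ C)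
    (hmeas1 : ∀ x : ↥E, Measurable fun f' : ↥F → ℝ => ⨆ y, Φ (x, y) * f' y)
    (hmeas2 : Measurable fun f : ↥E → ℝ =>
      ⨆ x, f x * ∫ f', (⨆ y, Φ (x, y) * f' y) ∂(P' x)) :
    ∫ x, (∫ y, Φ (x, y) ∂(p' x)) ∂p ≤
      ∫ f, (⨆ x, f x * ∫ f', (⨆ y, Φ (x, y) * f' y) ∂(P' x)) ∂P := by
  classical
  obtain ⟨C, hC⟩ := hΦb
  -- E is nonempty
  have hEne : Nonempty ↥E := by
    by_contra h
    have h1 : p Set.univ = 1 := measure_univ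
    rw [Set.univ_eq_empty_iff.2 (not_nonempty_iff.mp h)] at h1
    simp at h1
  obtain ⟨x0⟩ := hEne
  haveI : Nonempty ↥E := ⟨x0⟩
  have hFne : Nonempty ↥F := by
    by_contra h
    have h1 : (p' x0) Set.univ = 1 := measure_univ
    rw [Set.univ_eq_empty_iff.2 (not_nonempty_iff.mp h)] at h1
    simp at h1
  obtain ⟨y0⟩ := hFne
  haveI : Nonempty ↥F := ⟨y0⟩
  have hC0 : 0 ≤ C := le_trans (hΦ0 (x0, y0)) (hC (x0, y0))
  set g : ↥E → ℝ := fun x => ∫ f', (⨆ y, Φ (x, y) * f' y) ∂(P' x) with hg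
  -- bounds on the inner sup
  have hsup_mem : ∀ (x : ↥E) (f' : ↥F → ℝ), IsPossibility f' →
      (⨆ y, Φ (x, y) * f' y) ∈ Set.Icc (0 : ℝ) C := by
    intro x f' hposs
    obtain ⟨hf'm, hf'01, hf'sup⟩ := hposs
    have hb : ∀ y, Φ (x, y) * f' y ≤ C := by
      intro y
      nlinarith [hΦ0 (x, y), hC (x, y), (hf'01 y).1, (hf'01 y).2]
    have hbdd : BddAbove (Set.range fun y => Φ (x, y) * f' y) := by
      refine ⟨C, ?_⟩
      rintro _ ⟨y, rfl⟩
      exact hb y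
    constructor
    · exact le_trans (mul_nonneg (hΦ0 (x, y0)) (hf'01 y0).1) (le_ciSup hbdd y0)
    · exact ciSup_le hb
  have hg_mem : ∀ x, g x ∈ Set.Icc (0 : ℝ) C := by
    intro x
    constructor
    · apply integral_nonneg_of_ae
      filter_upwards [hP' x] with f' hf' using (hsup_mem x f' hf').1
    · calc g x ≤ ∫ _, C ∂(P' x) := by
            apply integral_mono_of_nonneg
            · filter_upwards [hP' x] with f' hf' using (hsup_mem x f' hf').1
            · exact integrable_const C
            · filter_upwards [hP' x] with f' hf' using (hsup_mem x f' hf').2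
        _ = C := by simp
  -- the function φ
  set φ : ↥E → ℝ := fun x => ∫ y, Φ (x, y) ∂(p' x) with hφ
  have hφm : Measurable φ := by
    have hsm : StronglyMeasurable (Function.uncurry fun x y => Φ (x, y)) := by
      exact hΦm.stronglyMeasurable
    exact (MeasureTheory.StronglyMeasurable.integral_kernel_prod_right hsm).measurable
  have hφ0 : ∀ x, 0 ≤ φ x := fun x => integral_nonneg fun y => hΦ0 (x, y)
  have hφC : ∀ x, φ x ≤ C := by
    intro x
    calc φ x ≤ ∫ _, C ∂(p' x) :=
          integral_mono_of_nonneg (Filter.Eventually.of_forall fun y => hΦ0 (x, y))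
            (integrable_const C) (Filter.Eventually.of_forall fun y => hC (x, y))
      _ = C := by simp
  have hφg : ∀ x, φ x ≤ g x := fun x =>
    hdom' x (fun y => Φ (x, y)) (hΦm.comp measurable_prodMk_left)
      (fun y => hΦ0 (x, y)) ⟨C, fun y => hC (x, y)⟩
  have step1 : ∫ x, φ x ∂p ≤ ∫ f, (⨆ x, φ x * f x) ∂P := hdom φ hφm hφ0 ⟨C, hφC⟩
  have step2 : ∫ f, (⨆ x, φ x * f x) ∂P ≤ ∫ f, (⨆ x, f x * g x) ∂P := by
    have h1 : ∀ᵐ f ∂P, 0 ≤ ⨆ x, φ x * f x := by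
      filter_upwards [hP] with f hposs
      obtain ⟨hfm, hf01, hfsup⟩ := hposs
      have hbdd : BddAbove (Set.range fun x => φ x * f x) := by
        refine ⟨C, ?_⟩
        rintro _ ⟨x, rfl⟩
        show φ x * f x ≤ C
        nlinarith [hφ0 x, hφC x, (hf01 x).1, (hf01 x).2]
      exact le_trans (mul_nonneg (hφ0 x0) (hf01 x0).1) (le_ciSup hbdd x0)
    have h2 : Integrable (fun f => ⨆ x, f x * g x) P := by
      apply (integrable_const C).mono' hmeas2.aestronglyMeasurable
      filter_upwards [hP] with f hposs
      obtain ⟨hfm, hf01, hfsup⟩ := hposs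
      rw [Real.norm_eq_abs, abs_le]
      have hub : ∀ x, f x * g x ≤ C := by
        intro x
        nlinarith [(hg_mem x).1, (hg_mem x).2, (hf01 x).1, (hf01 x).2]
      have hbdd : BddAbove (Set.range fun x => f x * g x) := by
        refine ⟨C, ?_⟩
        rintro _ ⟨x, rfl⟩
        exact hub x
      constructor
      · refine le_trans ?_ (le_ciSup hbdd x0)
        show -C ≤ f x0 * g x0
        nlinarith [(hg_mem x0).1, (hg_mem x0).2, (hf01 x0).1, (hf01 x0).2]
      · exact ciSup_le hub
    have h3 : ∀ᵐ f ∂P, (⨆ x, φ x * f x) ≤ ⨆ x, f x * g x := by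
      filter_upwards [hP] with f hposs
      obtain ⟨hfm, hf01, hfsup⟩ := hposs
      have hbdd : BddAbove (Set.range fun x => f x * g x) := by
        refine ⟨C, ?_⟩
        rintro _ ⟨x, rfl⟩
        show f x * g x ≤ C
        nlinarith [(hg_mem x).1, (hg_mem x).2, (hf01 x).1, (hf01 x).2]
      refine ciSup_mono hbdd fun x => ?_
      calc φ x * f x ≤ g x * f x := mul_le_mul_of_nonneg_right (hφg x) (hf01 x).1
        _ = f x * g x := mul_comm _ _
    exact integral_mono_of_nonneg h1 h2 h3
  exact le_trans step1 step2
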